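/- A disjoint union (forest) of tree-topology networks is synchronisable if and only if each of its component tree networks is synchronisable: τ(S_mb(N₁ ⊎ N₂)) = τ(S_sync(N₁ ⊎ N₂)) iff τ(S_mb(N₁)) = τ(S_sync(N₁)) and τ(S_mb(N₂)) = τ(S_sync(N₂)), where traces of the union are shuffles (arbitrary interleavings) of traces of the components. -/

import Mathlib

/-- A message with sender, receiver and payload. -/
structure Msg (P A : Type) where
  sender : P
  receiver : P
  payload : A
deriving DecidableEq

/-- Actions: send `!m` or receive `?m`. -/
inductive Act (P A : Type) where
  | send : Msg P A → Act P A
  | recv : Msg P A → Act P A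
deriving DecidableEq

namespace Act
variable {P A : Type}
def msg : Act P A → Msg P A | send m => m | recv m => m
def isSend : Act P A → Bool | send _ => true | recv _ => false
/-- The active participant of an action. -/
def active : Act P A → P | send m => m.sender | recv m => m.receiver
end Act

section Defs
variable {P A : Type}

/-- Projection onto send actions `w↓_!`. -/
def projOut (w : List (Act P A)) : List (Act P A) := w.filter Act.isSend
/-- Projection onto receive actions `w↓_?`. -/
def projIn (w : List (Act P A)) : List (Act P A) := w.filter (fun a => !a.isSend)
/-- Erase the `!`/`?` marks: `w↓_msg`. -/
def projMsg (w : List (Act P A)) : List (Msg P A) := w.map Act.msg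
/-- Projection onto actions in which `p` is active: `w↓_p`. -/
def projPeer [DecidableEq P] (p : P) (w : List (Act P A)) : List (Act P A) :=
  w.filter (fun a => decide (a.active = p))
/-- Projection onto actions involving only participants in `{p, q}`. -/
def projPQ [DecidableEq P] (p q : P) (w : List (Act P A)) : List (Act P A) :=
  w.filter (fun a =>
    (decide (a.msg.sender = p) || decide (a.msg.sender = q)) &&
    (decide (a.msg.receiver = p) || decide (a.msg.receiver = q)))

/-- A network of communicating automata. -/
structure Network (P A : Type) where
  State : P → Type
  init : ∀ p, State p
  trans : ∀ p, State p → Act P A → State p → Prop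
  final : ∀ p, Set (State p)
  Msgs : Set (Msg P A)

/-- Well-formedness: each automaton only performs actions in which it is active,
on messages of the network. -/
def Network.WF (N : Network P A) : Prop :=
  ∀ p s a s', N.trans p s a s' → a.msg ∈ N.Msgs ∧ a.active = p

/-- The set of participants sending to `p`. -/
def senders (N : Network P A) (p : P) : Set P :=
  {q | ∃ m ∈ N.Msgs, m.sender = q ∧ m.receiver = p}

/-- Directed edge of the topology. -/
def Network.Edge (N : Network P A) (p q : P) : Prop :=
  ∃ m ∈ N.Msgs, m.sender = p ∧ m.receiver = q

/-- The underlying undirected topology graph. -/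
def topoGraph (N : Network P A) : SimpleGraph P := SimpleGraph.fromRel N.Edge

/-- Tree topology: connected, acyclic, and every participant has at most one sender. -/
def TreeTopo (N : Network P A) : Prop :=
  (topoGraph N).IsTree ∧ ∀ p, (senders N p).Subsingleton

/-- Generic multi-step relation labelled by words of actions. -/
inductive Steps {C : Type _} (step : C → Act P A → C → Prop) : C → List (Act P A) → C → Prop where
  | nil (c : C) : Steps step c [] c
  | cons {c c' c'' : C} {a : Act P A} {w : List (Act P A)} :
      step c a c' → Steps step c' w c'' → Steps step c (a :: w) c''

variable [DecidableEq P]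

/-! ### Mailbox semantics -/

structure MbConfig (N : Network P A) where
  st : ∀ p, N.State p
  buf : P → List (Msg P A)

inductive MbStep (N : Network P A) : MbConfig N → Act P A → MbConfig N → Prop where
  | send (c : MbConfig N) (m : Msg P A) (s' : N.State m.sender) :
      N.trans m.sender (c.st m.sender) (.send m) s' →
      MbStep N c (.send m)
        ⟨Function.update c.st m.sender s',
         Function.update c.buf m.receiver (c.buf m.receiver ++ [m])⟩
  | recv (c : MbConfig N) (m : Msg P A) (s' : N.State m.receiver) (rest : List (Msg P A)) :
      N.trans m.receiver (c.st m.receiver) (.recv m) s' →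
      c.buf m.receiver = m :: rest →
      MbStep N c (.recv m)
        ⟨Function.update c.st m.receiver s',
         Function.update c.buf m.receiver rest⟩

def MbInit (N : Network P A) : MbConfig N := ⟨N.init, fun _ => []⟩
def MbFinal (N : Network P A) (c : MbConfig N) : Prop := ∀ p, c.st p ∈ N.final p
def MbReachable (N : Network P A) (c : MbConfig N) : Prop :=
  ∃ w, Steps (MbStep N) (MbInit N) w c
def MbExecs (N : Network P A) : Set (List (Act P A)) :=
  {w | ∃ c, Steps (MbStep N) (MbInit N) w c ∧ MbFinal N c}
def MbTraces (N : Network P A) : Set (List (Act P A)) := projOut '' MbExecs N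

/-! ### Peer-to-peer semantics -/

structure P2pConfig (N : Network P A) where
  st : ∀ p, N.State p
  buf : P → P → List (Msg P A)

inductive P2pStep (N : Network P A) : P2pConfig N → Act P A → P2pConfig N → Prop where
  | send (c : P2pConfig N) (m : Msg P A) (s' : N.State m.sender) :
      N.trans m.sender (c.st m.sender) (.send m) s' →
      P2pStep N c (.send m)
        ⟨Function.update c.st m.sender s',
         Function.update c.buf m.sender
           (Function.update (c.buf m.sender) m.receiver (c.buf m.sender m.receiver ++ [m]))⟩
  | recv (c : P2pConfig N) (m : Msg P A) (s' : N.State m.receiver) (rest : List (Msg P A)) :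
      N.trans m.receiver (c.st m.receiver) (.recv m) s' →
      c.buf m.sender m.receiver = m :: rest →
      P2pStep N c (.recv m)
        ⟨Function.update c.st m.receiver s',
         Function.update c.buf m.sender (Function.update (c.buf m.sender) m.receiver rest)⟩

def P2pInit (N : Network P A) : P2pConfig N := ⟨N.init, fun _ _ => []⟩
def P2pExecs (N : Network P A) : Set (List (Act P A)) :=
  {w | ∃ c, Steps (P2pStep N) (P2pInit N) w c ∧ ∀ p, c.st p ∈ N.final p}
def P2pTraces (N : Network P A) : Set (List (Act P A)) := projOut '' P2pExecs N

/-! ### Synchronous semantics -/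

inductive SyncStep (N : Network P A) : (∀ p, N.State p) → Act P A → (∀ p, N.State p) → Prop where
  | comm (st : ∀ p, N.State p) (m : Msg P A) (s1 : N.State m.sender) (s2 : N.State m.receiver) :
      N.trans m.sender (st m.sender) (.send m) s1 →
      N.trans m.receiver (st m.receiver) (.recv m) s2 →
      SyncStep N st (.send m)
        (Function.update (Function.update st m.sender s1) m.receiver s2)

def SyncExecs (N : Network P A) : Set (List (Act P A)) :=
  {w | ∃ st, Steps (SyncStep N) N.init w st ∧ ∀ p, st p ∈ N.final p}
def SyncTraces (N : Network P A) : Set (List (Act P A)) := projOut '' SyncExecs N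

/-! ### Local and influenced languages -/

inductive LocalPath (N : Network P A) (p : P) : N.State p → List (Act P A) → N.State p → Prop where
  | nil (s : N.State p) : LocalPath N p s [] s
  | cons {s s' s'' : N.State p} {a : Act P A} {w : List (Act P A)} :
      N.trans p s a s' → LocalPath N p s' w s'' → LocalPath N p s (a :: w) s''

/-- The language `L(A_p)` of the automaton of participant `p`. -/
def LocalLang (N : Network P A) (p : P) : Set (List (Act P A)) :=
  {w | ∃ s, LocalPath N p (N.init p) w s ∧ s ∈ N.final p}

/-- `L` is the family of influenced languages `L_T(A_p)` of a tree-topology network. -/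
def IsInfluenced (N : Network P A) (L : P → Set (List (Act P A))) : Prop :=
  (∀ p, senders N p = ∅ → L p = LocalLang N p) ∧
  (∀ p q, senders N p = {q} →
    L p = {w ∈ LocalLang N p | ∃ v ∈ L q, projMsg (projIn w) = projMsg (projOut v)})

/-! ### Shuffles -/

/-- One swap replacing an adjacent `!x ?y` by `?y !x`. -/
inductive SwapStep : List (Act P A) → List (Act P A) → Prop where
  | swap (u v : List (Act P A)) (x y : Msg P A) :
      SwapStep (u ++ Act.send x :: Act.recv y :: v) (u ++ Act.recv y :: Act.send x :: v)

/-- `w' ⋈_? w`: `w'` is a valid input shuffle of `w`. -/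
def ValidShuffle (w' w : List (Act P A)) : Prop := Relation.ReflTransGen SwapStep w w'

/-- The shuffled language `L_⋈(p)` of a language. -/
def ShuffleLang (Lp : Set (List (Act P A))) : Set (List (Act P A)) :=
  {w' | ∃ w ∈ Lp, ValidShuffle w' w}

/-- Insert after each send action its matching receive action. -/
def withRecvs (w : List (Act P A)) : List (Act P A) :=
  w.flatMap fun a => match a with
    | .send m => [.send m, .recv m]
    | .recv m => [.recv m]

end Defs

def Msg.map {P Q A : Type} (f : P → Q) (m : Msg P A) : Msg Q A :=
  ⟨f m.sender, f m.receiver, m.payload⟩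

def Act.map {P Q A : Type} (f : P → Q) : Act P A → Act Q A
  | .send m => .send (m.map f)
  | .recv m => .recv (m.map f)

/-- Disjoint union (side-by-side composition) of two networks. -/
def Network.sum {P₁ P₂ A : Type} (N₁ : Network P₁ A) (N₂ : Network P₂ A) :
    Network (P₁ ⊕ P₂) A where
  State := fun p => match p with | .inl p => N₁.State p | .inr p => N₂.State p
  init := fun p => match p with | .inl p => N₁.init p | .inr p => N₂.init p
  trans := fun p => match p with
    | .inl p => fun s a s' => ∃ a₁ : Act P₁ A, a = a₁.map Sum.inl ∧ N₁.trans p s a₁ s'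
    | .inr p => fun s a s' => ∃ a₂ : Act P₂ A, a = a₂.map Sum.inr ∧ N₂.trans p s a₂ s'
  final := fun p => match p with | .inl p => N₁.final p | .inr p => N₂.final p
  Msgs := {m | (∃ m₁ ∈ N₁.Msgs, m = m₁.map Sum.inl) ∨ (∃ m₂ ∈ N₂.Msgs, m = m₂.map Sum.inr)}

/-! ### Auxiliary development for forest synchronisability -/

section Interleave

inductive Interleave {α : Type} : List α → List α → List α → Prop
  | nil : Interleave [] [] []
  | left {a : α} {l₁ l₂ l : List α} : Interleave l₁ l₂ l → Interleave (a :: l₁) l₂ (a :: l)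
  | right {a : α} {l₁ l₂ l : List α} : Interleave l₁ l₂ l → Interleave l₁ (a :: l₂) (a :: l)

variable {α : Type}

lemma Interleave.nil_right : ∀ {l : List α}, Interleave l [] l
  | [] => .nil
  | _ :: _ => .left Interleave.nil_right

lemma Interleave.nil_right_eq : ∀ {l₁ l : List α}, Interleave l₁ [] l → l₁ = l
  | _, _, .nil => rfl
  | _, _, .left h => by rw [Interleave.nil_right_eq h]

lemma Interleave.nil_left : ∀ {l : List α}, Interleave [] l l
  | [] => .nil
  | _ :: _ => .right Interleave.nil_left

lemma Interleave.nil_left_eq : ∀ {l₂ l : List α}, Interleave [] l₂ l → l₂ = l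
  | _, _, .nil => rfl
  | _, _, .right h => by rw [Interleave.nil_left_eq h]

lemma Interleave.sublist_left : ∀ {l₁ l₂ l : List α}, Interleave l₁ l₂ l → l₁.Sublist l
  | _, _, _, .nil => List.Sublist.refl _
  | _, _, _, .left h => (h.sublist_left).cons₂ _
  | _, _, _, .right h => (h.sublist_left).cons _

lemma Interleave.sublist_right : ∀ {l₁ l₂ l : List α}, Interleave l₁ l₂ l → l₂.Sublist l
  | _, _, _, .nil => List.Sublist.refl _
  | _, _, _, .left h => (h.sublist_right).cons _
  | _, _, _, .right h => (h.sublist_right).cons₂ _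

lemma Interleave.filter (p : α → Bool) {l₁ l₂ l : List α} (h : Interleave l₁ l₂ l) :
    Interleave (l₁.filter p) (l₂.filter p) (l.filter p) := by
  induction h with
  | nil => exact .nil
  | @left a _ _ _ _ ih => by_cases hpa : p a <;> simp [List.filter_cons, hpa] <;>
      first | exact .left ih | exact ih
  | @right a _ _ _ _ ih => by_cases hpa : p a <;> simp [List.filter_cons, hpa] <;>
      first | exact .right ih | exact ih

lemma Interleave.append_left {u : List α} : ∀ {l₁ l₂ l : List α},
    Interleave l₁ l₂ l → Interleave (u ++ l₁) l₂ (u ++ l) := by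
  induction u with
  | nil => intro _ _ _ h; exact h
  | cons a u ih => intro _ _ _ h; exact .left (ih h)

lemma Interleave.append_right {u : List α} : ∀ {l₁ l₂ l : List α},
    Interleave l₁ l₂ l → Interleave l₁ (u ++ l₂) (u ++ l) := by
  induction u with
  | nil => intro _ _ _ h; exact h
  | cons a u ih => intro _ _ _ h; exact .right (ih h)

lemma Interleave.of_append : ∀ {l₁ l₂ : List α}, Interleave l₁ l₂ (l₁ ++ l₂)
  | [], l₂ => by simpa using Interleave.append_right (u := l₂) .nil
  | a :: l₁, l₂ => .left Interleave.of_append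

/-- Lift an interleaving of the `p`-filtered lists to an interleaving of full lists. -/
lemma interleave_filter_lift (p : α → Bool) {s₁ s₂ s : List α} (h : Interleave s₁ s₂ s) :
    ∀ {l₁ l₂ : List α}, l₁.filter p = s₁ → l₂.filter p = s₂ →
    ∃ l, Interleave l₁ l₂ l ∧ l.filter p = s := by
  induction h with
  | nil =>
    intro l₁ l₂ h₁ h₂
    exact ⟨l₁ ++ l₂, .of_append, by simp [List.filter_append, h₁, h₂]⟩
  | @left a s₁ s₂ s h ih =>
    intro l₁ l₂ h₁ h₂
    obtain ⟨u, v, rfl, hu, hpa, hv⟩ := List.filter_eq_cons_iff.mp h₁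
    obtain ⟨l, hl, hfl⟩ := ih hv h₂
    refine ⟨u ++ a :: l, .append_left (.left hl), ?_⟩
    simp [List.filter_append, List.filter_cons, hpa, hfl,
      List.filter_eq_nil_iff.mpr hu]
  | @right a s₁ s₂ s h ih =>
    intro l₁ l₂ h₁ h₂
    obtain ⟨u, v, rfl, hu, hpa, hv⟩ := List.filter_eq_cons_iff.mp h₂
    obtain ⟨l, hl, hfl⟩ := ih h₁ hv
    refine ⟨u ++ a :: l, .append_right (.right hl), ?_⟩
    simp [List.filter_append, List.filter_cons, hpa, hfl,
      List.filter_eq_nil_iff.mpr hu]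

end Interleave
section MapLemmas

variable {P Q A : Type}

lemma Msg.map_injective {f : P → Q} (hf : Function.Injective f) :
    Function.Injective (Msg.map (A := A) f) := by
  rintro ⟨a, b, c⟩ ⟨d, e, g⟩ h
  simp only [Msg.map, Msg.mk.injEq] at h ⊢
  exact ⟨hf h.1, hf h.2.1, h.2.2⟩

lemma Act.map_injective {f : P → Q} (hf : Function.Injective f) :
    Function.Injective (Act.map (A := A) f) := by
  rintro (m₁ | m₁) (m₂ | m₂) h <;> simp only [Act.map] at h ⊢ <;>
    simp_all <;> exact Msg.map_injective hf h

lemma Act.isSend_map (f : P → Q) (a : Act P A) : (a.map f).isSend = a.isSend := by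
  cases a <;> rfl

lemma projOut_map (f : P → Q) (w : List (Act P A)) :
    projOut (w.map (Act.map f)) = (projOut w).map (Act.map f) := by
  unfold projOut
  rw [List.filter_map]
  congr 1
  apply List.filter_congr
  intro a _
  simp [Function.comp, Act.isSend_map]

lemma act_map_inl_ne_inr {P₁ P₂ : Type} (a₁ : Act P₁ A) (a₂ : Act P₂ A) :
    a₁.map Sum.inl ≠ a₂.map Sum.inr := by
  cases a₁ <;> cases a₂ <;> simp [Act.map, Msg.map]

end MapLemmas

section Mix

variable {P₁ P₂ A : Type}

/-- Interleavings of mapped words from `T₁` and `T₂`. -/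
def Mix (T₁ : Set (List (Act P₁ A))) (T₂ : Set (List (Act P₂ A))) :
    Set (List (Act (P₁ ⊕ P₂) A)) :=
  {w | ∃ t₁ ∈ T₁, ∃ t₂ ∈ T₂, Interleave (t₁.map (Act.map Sum.inl)) (t₂.map (Act.map Sum.inr)) w}

lemma mix_left_iff {T₁ : Set (List (Act P₁ A))} {T₂ : Set (List (Act P₂ A))}
    (h₂ : [] ∈ T₂) (t : List (Act P₁ A)) :
    t.map (Act.map Sum.inl) ∈ Mix T₁ T₂ ↔ t ∈ T₁ := by
  constructor
  · rintro ⟨t₁, ht₁, t₂, ht₂, hI⟩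
    have hsub := hI.sublist_right
    have ht₂nil : t₂ = [] := by
      cases t₂ with
      | nil => rfl
      | cons a t₂ =>
        exfalso
        have : (Act.map Sum.inr a) ∈ t.map (Act.map Sum.inl) :=
          hsub.mem (by simp)
        obtain ⟨b, _, hb⟩ := List.mem_map.mp this
        exact act_map_inl_ne_inr b a hb
    subst ht₂nil
    have := hI.nil_right_eq
    have : t₁ = t := List.map_injective_iff.mpr (Act.map_injective Sum.inl_injective) this
    exact this ▸ ht₁
  · intro ht
    exact ⟨t, ht, [], h₂, by simpa using Interleave.nil_right⟩

lemma mix_right_iff {T₁ : Set (List (Act P₁ A))} {T₂ : Set (List (Act P₂ A))}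
    (h₁ : [] ∈ T₁) (t : List (Act P₂ A)) :
    t.map (Act.map Sum.inr) ∈ Mix T₁ T₂ ↔ t ∈ T₂ := by
  constructor
  · rintro ⟨t₁, ht₁, t₂, ht₂, hI⟩
    have hsub := hI.sublist_left
    have ht₁nil : t₁ = [] := by
      cases t₁ with
      | nil => rfl
      | cons a t₁ =>
        exfalso
        have : (Act.map Sum.inl a) ∈ t.map (Act.map Sum.inr) :=
          hsub.mem (by simp)
        obtain ⟨b, _, hb⟩ := List.mem_map.mp this
        exact act_map_inl_ne_inr a b hb.symm
    subst ht₁nil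
    have := hI.nil_left_eq
    have : t₂ = t := List.map_injective_iff.mpr (Act.map_injective Sum.inr_injective) this
    exact this ▸ ht₂
  · intro ht
    exact ⟨[], h₁, t, ht, by simpa using Interleave.nil_left⟩

end Mix
section SumSync

variable {P₁ P₂ A : Type} [DecidableEq P₁] [DecidableEq P₂]
  {N₁ : Network P₁ A} {N₂ : Network P₂ A}

/-- Correspondence between a global state of the sum and states of the components. -/
def SyncRel (st : ∀ p, (N₁.sum N₂).State p)
    (st₁ : ∀ p, N₁.State p) (st₂ : ∀ p, N₂.State p) : Prop :=
  (∀ p, st (.inl p) = st₁ p) ∧ (∀ p, st (.inr p) = st₂ p)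

lemma sync_lift_left {st : ∀ p, (N₁.sum N₂).State p} {st₁ st₂} {a : Act P₁ A} {st₁'}
    (hr : SyncRel st st₁ st₂) (h : SyncStep N₁ st₁ a st₁') :
    ∃ st', SyncStep (N₁.sum N₂) st (a.map Sum.inl) st' ∧ SyncRel st' st₁' st₂ := by
  obtain ⟨h1, h2⟩ := hr
  cases h with
  | comm m s1 s2 ht1 ht2 =>
    obtain ⟨ms, mr, pl⟩ := m
    refine ⟨_, SyncStep.comm st ⟨Sum.inl ms, Sum.inl mr, pl⟩ s1 s2
        ⟨.send ⟨ms, mr, pl⟩, rfl, (h1 ms).symm ▸ ht1⟩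
        ⟨.recv ⟨ms, mr, pl⟩, rfl, (h1 mr).symm ▸ ht2⟩, ?_, ?_⟩
    · intro p
      by_cases hp : p = mr
      · subst hp; erw [Function.update_self, Function.update_self]
      · erw [Function.update_of_ne (by simpa using hp), Function.update_of_ne hp]
        by_cases hq : p = ms
        · subst hq; erw [Function.update_self, Function.update_self]
        · erw [Function.update_of_ne (by simpa using hq), Function.update_of_ne hq]
          exact h1 p
    · intro p
      erw [Function.update_of_ne (by simp), Function.update_of_ne (by simp)]
      exact h2 p

lemma sync_lift_right {st : ∀ p, (N₁.sum N₂).State p} {st₁ st₂} {a : Act P₂ A} {st₂'}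
    (hr : SyncRel st st₁ st₂) (h : SyncStep N₂ st₂ a st₂') :
    ∃ st', SyncStep (N₁.sum N₂) st (a.map Sum.inr) st' ∧ SyncRel st' st₁ st₂' := by
  obtain ⟨h1, h2⟩ := hr
  cases h with
  | comm m s1 s2 ht1 ht2 =>
    obtain ⟨ms, mr, pl⟩ := m
    refine ⟨_, SyncStep.comm st ⟨Sum.inr ms, Sum.inr mr, pl⟩ s1 s2
        ⟨.send ⟨ms, mr, pl⟩, rfl, (h2 ms).symm ▸ ht1⟩
        ⟨.recv ⟨ms, mr, pl⟩, rfl, (h2 mr).symm ▸ ht2⟩, ?_, ?_⟩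
    · intro p
      erw [Function.update_of_ne (by simp), Function.update_of_ne (by simp)]
      exact h1 p
    · intro p
      by_cases hp : p = mr
      · subst hp; erw [Function.update_self, Function.update_self]
      · erw [Function.update_of_ne (by simpa using hp), Function.update_of_ne hp]
        by_cases hq : p = ms
        · subst hq; erw [Function.update_self, Function.update_self]
        · erw [Function.update_of_ne (by simpa using hq), Function.update_of_ne hq]
          exact h2 p

lemma sync_step_decomp {st st' : ∀ p, (N₁.sum N₂).State p} {st₁ st₂} {a}
    (hr : SyncRel st st₁ st₂) (h : SyncStep (N₁.sum N₂) st a st') :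
    (∃ a₁ st₁', a = a₁.map Sum.inl ∧ SyncStep N₁ st₁ a₁ st₁' ∧ SyncRel st' st₁' st₂) ∨
    (∃ a₂ st₂', a = a₂.map Sum.inr ∧ SyncStep N₂ st₂ a₂ st₂' ∧ SyncRel st' st₁ st₂') := by
  have hr' := hr
  obtain ⟨h1, h2⟩ := hr'
  cases h with
  | comm m s1 s2 ht1 ht2 =>
    obtain ⟨ms, mr, pl⟩ := m
    cases ms with
    | inl p =>
      obtain ⟨a₁, ha, ht1'⟩ := ht1
      cases a₁ with
      | recv m₁ => exact absurd ha (by cases m₁; simp [Act.map, Msg.map])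
      | send m₁ =>
        obtain ⟨s₁, r₁, pl₁⟩ := m₁
        simp only [Act.map, Msg.map, Act.send.injEq, Msg.mk.injEq,
          Sum.inl.injEq] at ha
        obtain ⟨hp, hmr, hpl⟩ := ha
        subst hp; subst hmr; subst hpl
        obtain ⟨a₂, hb, ht2'⟩ := ht2
        cases a₂ with
        | send m₂ => exact absurd hb (by cases m₂; simp [Act.map, Msg.map])
        | recv m₂ =>
          obtain ⟨s₂, r₂, pl₂⟩ := m₂
          simp only [Act.map, Msg.map, Act.recv.injEq, Msg.mk.injEq,
            Sum.inl.injEq] at hb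
          obtain ⟨hs, hr₂, hpl₂⟩ := hb
          subst hs; subst hr₂; subst hpl₂
          rw [h1] at ht1' ht2'
          refine .inl ⟨.send ⟨p, r₁, pl⟩, _, rfl,
            SyncStep.comm st₁ ⟨p, r₁, pl⟩ s1 s2 ht1' ht2', ?_, ?_⟩
          · intro q
            by_cases hq : q = r₁
            · subst hq; erw [Function.update_self, Function.update_self]
            · erw [Function.update_of_ne (by simpa using hq), Function.update_of_ne hq]
              by_cases hq' : q = p
              · subst hq'; erw [Function.update_self, Function.update_self]
              · erw [Function.update_of_ne (by simpa using hq'), Function.update_of_ne hq']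
                exact h1 q
          · intro q
            erw [Function.update_of_ne (by simp), Function.update_of_ne (by simp)]
            exact h2 q
    | inr p =>
      obtain ⟨a₁, ha, ht1'⟩ := ht1
      cases a₁ with
      | recv m₁ => exact absurd ha (by cases m₁; simp [Act.map, Msg.map])
      | send m₁ =>
        obtain ⟨s₁, r₁, pl₁⟩ := m₁
        simp only [Act.map, Msg.map, Act.send.injEq, Msg.mk.injEq,
          Sum.inr.injEq] at ha
        obtain ⟨hp, hmr, hpl⟩ := ha
        subst hp; subst hmr; subst hpl
        obtain ⟨a₂, hb, ht2'⟩ := ht2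
        cases a₂ with
        | send m₂ => exact absurd hb (by cases m₂; simp [Act.map, Msg.map])
        | recv m₂ =>
          obtain ⟨s₂, r₂, pl₂⟩ := m₂
          simp only [Act.map, Msg.map, Act.recv.injEq, Msg.mk.injEq,
            Sum.inr.injEq] at hb
          obtain ⟨hs, hr₂, hpl₂⟩ := hb
          subst hs; subst hr₂; subst hpl₂
          rw [h2] at ht1' ht2'
          refine .inr ⟨.send ⟨p, r₁, pl⟩, _, rfl,
            SyncStep.comm st₂ ⟨p, r₁, pl⟩ s1 s2 ht1' ht2', ?_, ?_⟩
          · intro q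
            erw [Function.update_of_ne (by simp), Function.update_of_ne (by simp)]
            exact h1 q
          · intro q
            by_cases hq : q = r₁
            · subst hq; erw [Function.update_self, Function.update_self]
            · erw [Function.update_of_ne (by simpa using hq), Function.update_of_ne hq]
              by_cases hq' : q = p
              · subst hq'; erw [Function.update_self, Function.update_self]
              · erw [Function.update_of_ne (by simpa using hq'), Function.update_of_ne hq']
                exact h2 q

lemma sync_steps_decomp {st : ∀ p, (N₁.sum N₂).State p} {w st'}
    (h : Steps (SyncStep (N₁.sum N₂)) st w st') :
    ∀ {st₁ st₂}, SyncRel st st₁ st₂ →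
    ∃ w₁ w₂ st₁' st₂', Interleave (w₁.map (Act.map Sum.inl)) (w₂.map (Act.map Sum.inr)) w ∧
      Steps (SyncStep N₁) st₁ w₁ st₁' ∧ Steps (SyncStep N₂) st₂ w₂ st₂' := by
  induction h with
  | nil c => intro st₁ st₂ _; exact ⟨[], [], st₁, st₂, .nil, .nil _, .nil _⟩
  | cons hstep hrest ih =>
    intro st₁ st₂ hr
    rcases sync_step_decomp hr hstep with ⟨a₁, d₁, rfl, h₁, hr'⟩ | ⟨a₂, d₂, rfl, h₂, hr'⟩
    · obtain ⟨w₁, w₂, e₁, e₂, hI, hs₁, hs₂⟩ := ih hr'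
      exact ⟨a₁ :: w₁, w₂, e₁, e₂, .left hI, .cons h₁ hs₁, hs₂⟩
    · obtain ⟨w₁, w₂, e₁, e₂, hI, hs₁, hs₂⟩ := ih hr'
      exact ⟨w₁, a₂ :: w₂, e₁, e₂, .right hI, hs₁, .cons h₂ hs₂⟩

lemma sync_steps_comp {l₁ l₂ w : List (Act (P₁ ⊕ P₂) A)}
    (h : Interleave l₁ l₂ w) :
    ∀ {w₁ : List (Act P₁ A)} {w₂ : List (Act P₂ A)},
      l₁ = w₁.map (Act.map Sum.inl) → l₂ = w₂.map (Act.map Sum.inr) →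
    ∀ {st st₁ st₂ d₁ d₂}, SyncRel (N₁ := N₁) (N₂ := N₂) st st₁ st₂ →
      Steps (SyncStep N₁) st₁ w₁ d₁ → Steps (SyncStep N₂) st₂ w₂ d₂ →
      ∃ d, Steps (SyncStep (N₁.sum N₂)) st w d := by
  induction h with
  | nil => intro w₁ w₂ _ _ st _ _ _ _ _ _ _; exact ⟨st, .nil st⟩
  | left h ih =>
    intro w₁ w₂ e₁ e₂ st st₁ st₂ d₁ d₂ hr hs₁ hs₂
    cases w₁ with
    | nil => simp at e₁
    | cons b t =>
      rw [List.map_cons] at e₁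
      injection e₁ with ea el
      subst ea
      cases hs₁ with
      | cons hstep hrest =>
        obtain ⟨st', hstep', hr'⟩ := sync_lift_left hr hstep
        obtain ⟨d, hd⟩ := ih el e₂ hr' hrest hs₂
        exact ⟨d, .cons hstep' hd⟩
  | right h ih =>
    intro w₁ w₂ e₁ e₂ st st₁ st₂ d₁ d₂ hr hs₁ hs₂
    cases w₂ with
    | nil => simp at e₂
    | cons b t =>
      rw [List.map_cons] at e₂
      injection e₂ with ea el
      subst ea
      cases hs₂ with
      | cons hstep hrest =>
        obtain ⟨st', hstep', hr'⟩ := sync_lift_right hr hstep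
        obtain ⟨d, hd⟩ := ih e₁ el hr' hs₁ hrest
        exact ⟨d, .cons hstep' hd⟩

end SumSync
section SyncTracesSum

variable {P₁ P₂ A : Type} [DecidableEq P₁] [DecidableEq P₂]
  {N₁ : Network P₁ A} {N₂ : Network P₂ A}

lemma syncRel_init : SyncRel (N₁ := N₁) (N₂ := N₂) (N₁.sum N₂).init N₁.init N₂.init :=
  ⟨fun _ => rfl, fun _ => rfl⟩

lemma sum_final (hfin₁ : ∀ p, N₁.final p = Set.univ) (hfin₂ : ∀ p, N₂.final p = Set.univ)
    (st : ∀ p, (N₁.sum N₂).State p) (p : P₁ ⊕ P₂) : st p ∈ (N₁.sum N₂).final p := by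
  cases p with
  | inl p => show st (Sum.inl p) ∈ N₁.final p; rw [hfin₁]; trivial
  | inr p => show st (Sum.inr p) ∈ N₂.final p; rw [hfin₂]; trivial

lemma syncTraces_sum (hfin₁ : ∀ p, N₁.final p = Set.univ)
    (hfin₂ : ∀ p, N₂.final p = Set.univ) :
    SyncTraces (N₁.sum N₂) = Mix (SyncTraces N₁) (SyncTraces N₂) := by
  ext w
  constructor
  · rintro ⟨e, ⟨st, hsteps, -⟩, rfl⟩
    obtain ⟨w₁, w₂, d₁, d₂, hI, h₁, h₂⟩ := sync_steps_decomp hsteps syncRel_init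
    refine ⟨projOut w₁, ⟨w₁, ⟨d₁, h₁, by simp [hfin₁]⟩, rfl⟩,
            projOut w₂, ⟨w₂, ⟨d₂, h₂, by simp [hfin₂]⟩, rfl⟩, ?_⟩
    have := hI.filter Act.isSend
    rwa [show (w₁.map (Act.map Sum.inl)).filter Act.isSend
        = (projOut w₁).map (Act.map Sum.inl) from projOut_map _ _,
      show (w₂.map (Act.map Sum.inr)).filter Act.isSend
        = (projOut w₂).map (Act.map Sum.inr) from projOut_map _ _] at this
  · rintro ⟨t₁, ⟨e₁, ⟨d₁, h₁, -⟩, rfl⟩, t₂, ⟨e₂, ⟨d₂, h₂, -⟩, rfl⟩, hI⟩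
    obtain ⟨e, hIe, hfe⟩ :=
      interleave_filter_lift Act.isSend hI (projOut_map _ e₁) (projOut_map _ e₂)
    obtain ⟨d, hd⟩ := sync_steps_comp hIe rfl rfl syncRel_init h₁ h₂
    exact ⟨e, ⟨d, hd, sum_final hfin₁ hfin₂ d⟩, hfe⟩

end SyncTracesSum
section SumMb

variable {P₁ P₂ A : Type} [DecidableEq P₁] [DecidableEq P₂]
  {N₁ : Network P₁ A} {N₂ : Network P₂ A}

/-- Correspondence between a mailbox configuration of the sum and of the components. -/
def MbRel (c : MbConfig (N₁.sum N₂)) (c₁ : MbConfig N₁) (c₂ : MbConfig N₂) : Prop :=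
  (∀ p, c.st (.inl p) = c₁.st p) ∧ (∀ p, c.st (.inr p) = c₂.st p) ∧
  (∀ p, c.buf (.inl p) = (c₁.buf p).map (Msg.map Sum.inl)) ∧
  (∀ p, c.buf (.inr p) = (c₂.buf p).map (Msg.map Sum.inr))

lemma mbRel_init : MbRel (N₁ := N₁) (N₂ := N₂) (MbInit (N₁.sum N₂)) (MbInit N₁) (MbInit N₂) :=
  ⟨fun _ => rfl, fun _ => rfl, fun _ => rfl, fun _ => rfl⟩

lemma mb_lift_left {c : MbConfig (N₁.sum N₂)} {c₁ c₂} {a : Act P₁ A} {d₁}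
    (hr : MbRel c c₁ c₂) (h : MbStep N₁ c₁ a d₁) :
    ∃ d, MbStep (N₁.sum N₂) c (a.map Sum.inl) d ∧ MbRel d d₁ c₂ := by
  obtain ⟨h1, h2, h3, h4⟩ := hr
  cases h with
  | send m s' ht =>
    obtain ⟨ms, mr, pl⟩ := m
    refine ⟨_, MbStep.send c ⟨Sum.inl ms, Sum.inl mr, pl⟩ s'
        ⟨.send ⟨ms, mr, pl⟩, rfl, (h1 ms).symm ▸ ht⟩, ?_, ?_, ?_, ?_⟩
    · intro p
      dsimp only
      by_cases hp : p = ms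
      · subst hp; erw [Function.update_self, Function.update_self]
      · erw [Function.update_of_ne (by simpa using hp), Function.update_of_ne hp]
        exact h1 p
    · intro p
      dsimp only
      erw [Function.update_of_ne (by simp)]
      exact h2 p
    · intro p
      dsimp only
      by_cases hp : p = mr
      · subst hp; simp [h3, Msg.map]
      · erw [Function.update_of_ne (by simpa using hp), Function.update_of_ne hp]
        exact h3 p
    · intro p
      dsimp only
      erw [Function.update_of_ne (by simp)]
      exact h4 p
  | recv m s' rest ht hbuf =>
    obtain ⟨ms, mr, pl⟩ := m
    refine ⟨_, MbStep.recv c ⟨Sum.inl ms, Sum.inl mr, pl⟩ s' (rest.map (Msg.map Sum.inl))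
        ⟨.recv ⟨ms, mr, pl⟩, rfl, (h1 mr).symm ▸ ht⟩
        (by rw [h3, hbuf]; rfl), ?_, ?_, ?_, ?_⟩
    · intro p
      dsimp only
      by_cases hp : p = mr
      · subst hp; erw [Function.update_self, Function.update_self]
      · erw [Function.update_of_ne (by simpa using hp), Function.update_of_ne hp]
        exact h1 p
    · intro p
      dsimp only
      erw [Function.update_of_ne (by simp)]
      exact h2 p
    · intro p
      dsimp only
      by_cases hp : p = mr
      · subst hp; simp
      · erw [Function.update_of_ne (by simpa using hp), Function.update_of_ne hp]
        exact h3 p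
    · intro p
      dsimp only
      erw [Function.update_of_ne (by simp)]
      exact h4 p

lemma mb_lift_right {c : MbConfig (N₁.sum N₂)} {c₁ c₂} {a : Act P₂ A} {d₂}
    (hr : MbRel c c₁ c₂) (h : MbStep N₂ c₂ a d₂) :
    ∃ d, MbStep (N₁.sum N₂) c (a.map Sum.inr) d ∧ MbRel d c₁ d₂ := by
  obtain ⟨h1, h2, h3, h4⟩ := hr
  cases h with
  | send m s' ht =>
    obtain ⟨ms, mr, pl⟩ := m
    refine ⟨_, MbStep.send c ⟨Sum.inr ms, Sum.inr mr, pl⟩ s'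
        ⟨.send ⟨ms, mr, pl⟩, rfl, (h2 ms).symm ▸ ht⟩, ?_, ?_, ?_, ?_⟩
    · intro p
      dsimp only
      erw [Function.update_of_ne (by simp)]
      exact h1 p
    · intro p
      dsimp only
      by_cases hp : p = ms
      · subst hp; erw [Function.update_self, Function.update_self]
      · erw [Function.update_of_ne (by simpa using hp), Function.update_of_ne hp]
        exact h2 p
    · intro p
      dsimp only
      erw [Function.update_of_ne (by simp)]
      exact h3 p
    · intro p
      dsimp only
      by_cases hp : p = mr
      · subst hp; simp [h4, Msg.map]
      · erw [Function.update_of_ne (by simpa using hp), Function.update_of_ne hp]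
        exact h4 p
  | recv m s' rest ht hbuf =>
    obtain ⟨ms, mr, pl⟩ := m
    refine ⟨_, MbStep.recv c ⟨Sum.inr ms, Sum.inr mr, pl⟩ s' (rest.map (Msg.map Sum.inr))
        ⟨.recv ⟨ms, mr, pl⟩, rfl, (h2 mr).symm ▸ ht⟩
        (by rw [h4, hbuf]; rfl), ?_, ?_, ?_, ?_⟩
    · intro p
      dsimp only
      erw [Function.update_of_ne (by simp)]
      exact h1 p
    · intro p
      dsimp only
      by_cases hp : p = mr
      · subst hp; erw [Function.update_self, Function.update_self]
      · erw [Function.update_of_ne (by simpa using hp), Function.update_of_ne hp]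
        exact h2 p
    · intro p
      dsimp only
      erw [Function.update_of_ne (by simp)]
      exact h3 p
    · intro p
      dsimp only
      by_cases hp : p = mr
      · subst hp; simp
      · erw [Function.update_of_ne (by simpa using hp), Function.update_of_ne hp]
        exact h4 p

end SumMb
section SumMbDecomp

variable {P₁ P₂ A : Type} [DecidableEq P₁] [DecidableEq P₂]
  {N₁ : Network P₁ A} {N₂ : Network P₂ A}

lemma mb_step_decomp {c d : MbConfig (N₁.sum N₂)} {c₁ c₂} {a}
    (hr : MbRel c c₁ c₂) (h : MbStep (N₁.sum N₂) c a d) :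
    (∃ a₁ d₁, a = a₁.map Sum.inl ∧ MbStep N₁ c₁ a₁ d₁ ∧ MbRel d d₁ c₂) ∨
    (∃ a₂ d₂, a = a₂.map Sum.inr ∧ MbStep N₂ c₂ a₂ d₂ ∧ MbRel d c₁ d₂) := by
  obtain ⟨h1, h2, h3, h4⟩ := hr
  cases h with
  | send m s' ht =>
    obtain ⟨ms, mr, pl⟩ := m
    cases ms with
    | inl p =>
      obtain ⟨a₁, ha, ht'⟩ := ht
      cases a₁ with
      | recv m₁ => exact absurd ha (by cases m₁; simp [Act.map, Msg.map])
      | send m₁ =>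
        obtain ⟨s₁, r₁, pl₁⟩ := m₁
        simp only [Act.map, Msg.map, Act.send.injEq, Msg.mk.injEq, Sum.inl.injEq] at ha
        obtain ⟨hp, hmr, hpl⟩ := ha
        subst hp; subst hmr; subst hpl
        rw [h1] at ht'
        refine .inl ⟨.send ⟨p, r₁, pl⟩, _, rfl, MbStep.send c₁ ⟨p, r₁, pl⟩ s' ht',
          ?_, ?_, ?_, ?_⟩
        · intro q
          dsimp only
          by_cases hq : q = p
          · subst hq; erw [Function.update_self, Function.update_self]
          · erw [Function.update_of_ne (by simpa using hq), Function.update_of_ne hq]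
            exact h1 q
        · intro q
          dsimp only
          erw [Function.update_of_ne (by simp)]
          exact h2 q
        · intro q
          dsimp only
          by_cases hq : q = r₁
          · subst hq; simp [h3, Msg.map]
          · erw [Function.update_of_ne (by simpa using hq), Function.update_of_ne hq]
            exact h3 q
        · intro q
          dsimp only
          erw [Function.update_of_ne (by simp)]
          exact h4 q
    | inr p =>
      obtain ⟨a₂, ha, ht'⟩ := ht
      cases a₂ with
      | recv m₂ => exact absurd ha (by cases m₂; simp [Act.map, Msg.map])
      | send m₂ =>
        obtain ⟨s₁, r₁, pl₁⟩ := m₂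
        simp only [Act.map, Msg.map, Act.send.injEq, Msg.mk.injEq, Sum.inr.injEq] at ha
        obtain ⟨hp, hmr, hpl⟩ := ha
        subst hp; subst hmr; subst hpl
        rw [h2] at ht'
        refine .inr ⟨.send ⟨p, r₁, pl⟩, _, rfl, MbStep.send c₂ ⟨p, r₁, pl⟩ s' ht',
          ?_, ?_, ?_, ?_⟩
        · intro q
          dsimp only
          erw [Function.update_of_ne (by simp)]
          exact h1 q
        · intro q
          dsimp only
          by_cases hq : q = p
          · subst hq; erw [Function.update_self, Function.update_self]
          · erw [Function.update_of_ne (by simpa using hq), Function.update_of_ne hq]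
            exact h2 q
        · intro q
          dsimp only
          erw [Function.update_of_ne (by simp)]
          exact h3 q
        · intro q
          dsimp only
          by_cases hq : q = r₁
          · subst hq; simp [h4, Msg.map]
          · erw [Function.update_of_ne (by simpa using hq), Function.update_of_ne hq]
            exact h4 q
  | recv m s' rest ht hbuf =>
    obtain ⟨ms, mr, pl⟩ := m
    cases mr with
    | inl r =>
      obtain ⟨a₁, ha, ht'⟩ := ht
      cases a₁ with
      | send m₁ => exact absurd ha (by cases m₁; simp [Act.map, Msg.map])
      | recv m₁ =>
        obtain ⟨s₁, r₁, pl₁⟩ := m₁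
        simp only [Act.map, Msg.map, Act.recv.injEq, Msg.mk.injEq, Sum.inl.injEq] at ha
        obtain ⟨hp, hmr, hpl⟩ := ha
        subst hp; subst hmr; subst hpl
        rw [h1] at ht'
        rw [h3] at hbuf
        cases hb : c₁.buf r with
        | nil => rw [hb] at hbuf; simp at hbuf
        | cons b bs =>
          rw [hb, List.map_cons] at hbuf
          injection hbuf with hhead htail
          obtain ⟨bs', br, bp⟩ := b
          simp only [Msg.map, Msg.mk.injEq, Sum.inl.injEq] at hhead
          obtain ⟨hbs, hbr, hbp⟩ := hhead
          subst hbs; subst hbr; subst hbp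
          subst htail
          refine .inl ⟨.recv ⟨bs', br, bp⟩, _, rfl,
            MbStep.recv c₁ ⟨bs', br, bp⟩ s' bs ht' hb, ?_, ?_, ?_, ?_⟩
          · intro q
            dsimp only
            by_cases hq : q = br
            · subst hq; erw [Function.update_self, Function.update_self]
            · erw [Function.update_of_ne (by simpa using hq), Function.update_of_ne hq]
              exact h1 q
          · intro q
            dsimp only
            erw [Function.update_of_ne (by simp)]
            exact h2 q
          · intro q
            dsimp only
            by_cases hq : q = br
            · subst hq; simp
            · erw [Function.update_of_ne (by simpa using hq), Function.update_of_ne hq]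
              exact h3 q
          · intro q
            dsimp only
            erw [Function.update_of_ne (by simp)]
            exact h4 q
    | inr r =>
      obtain ⟨a₂, ha, ht'⟩ := ht
      cases a₂ with
      | send m₂ => exact absurd ha (by cases m₂; simp [Act.map, Msg.map])
      | recv m₂ =>
        obtain ⟨s₁, r₁, pl₁⟩ := m₂
        simp only [Act.map, Msg.map, Act.recv.injEq, Msg.mk.injEq, Sum.inr.injEq] at ha
        obtain ⟨hp, hmr, hpl⟩ := ha
        subst hp; subst hmr; subst hpl
        rw [h2] at ht'
        rw [h4] at hbuf
        cases hb : c₂.buf r with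
        | nil => rw [hb] at hbuf; simp at hbuf
        | cons b bs =>
          rw [hb, List.map_cons] at hbuf
          injection hbuf with hhead htail
          obtain ⟨bs', br, bp⟩ := b
          simp only [Msg.map, Msg.mk.injEq, Sum.inr.injEq] at hhead
          obtain ⟨hbs, hbr, hbp⟩ := hhead
          subst hbs; subst hbr; subst hbp
          subst htail
          refine .inr ⟨.recv ⟨bs', br, bp⟩, _, rfl,
            MbStep.recv c₂ ⟨bs', br, bp⟩ s' bs ht' hb, ?_, ?_, ?_, ?_⟩
          · intro q
            dsimp only
            erw [Function.update_of_ne (by simp)]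
            exact h1 q
          · intro q
            dsimp only
            by_cases hq : q = br
            · subst hq; erw [Function.update_self, Function.update_self]
            · erw [Function.update_of_ne (by simpa using hq), Function.update_of_ne hq]
              exact h2 q
          · intro q
            dsimp only
            erw [Function.update_of_ne (by simp)]
            exact h3 q
          · intro q
            dsimp only
            by_cases hq : q = br
            · subst hq; simp
            · erw [Function.update_of_ne (by simpa using hq), Function.update_of_ne hq]
              exact h4 q

end SumMbDecomp
section SumMbTraces

variable {P₁ P₂ A : Type} [DecidableEq P₁] [DecidableEq P₂]
  {N₁ : Network P₁ A} {N₂ : Network P₂ A}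

lemma mb_steps_decomp {c : MbConfig (N₁.sum N₂)} {w c'}
    (h : Steps (MbStep (N₁.sum N₂)) c w c') :
    ∀ {c₁ c₂}, MbRel c c₁ c₂ →
    ∃ w₁ w₂ d₁ d₂, Interleave (w₁.map (Act.map Sum.inl)) (w₂.map (Act.map Sum.inr)) w ∧
      Steps (MbStep N₁) c₁ w₁ d₁ ∧ Steps (MbStep N₂) c₂ w₂ d₂ := by
  induction h with
  | nil c => intro c₁ c₂ _; exact ⟨[], [], c₁, c₂, .nil, .nil _, .nil _⟩
  | cons hstep hrest ih =>
    intro c₁ c₂ hr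
    rcases mb_step_decomp hr hstep with ⟨a₁, d₁, rfl, h₁, hr'⟩ | ⟨a₂, d₂, rfl, h₂, hr'⟩
    · obtain ⟨w₁, w₂, e₁, e₂, hI, hs₁, hs₂⟩ := ih hr'
      exact ⟨a₁ :: w₁, w₂, e₁, e₂, .left hI, .cons h₁ hs₁, hs₂⟩
    · obtain ⟨w₁, w₂, e₁, e₂, hI, hs₁, hs₂⟩ := ih hr'
      exact ⟨w₁, a₂ :: w₂, e₁, e₂, .right hI, hs₁, .cons h₂ hs₂⟩

lemma mb_steps_comp {l₁ l₂ w : List (Act (P₁ ⊕ P₂) A)}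
    (h : Interleave l₁ l₂ w) :
    ∀ {w₁ : List (Act P₁ A)} {w₂ : List (Act P₂ A)},
      l₁ = w₁.map (Act.map Sum.inl) → l₂ = w₂.map (Act.map Sum.inr) →
    ∀ {c c₁ c₂ d₁ d₂}, MbRel (N₁ := N₁) (N₂ := N₂) c c₁ c₂ →
      Steps (MbStep N₁) c₁ w₁ d₁ → Steps (MbStep N₂) c₂ w₂ d₂ →
      ∃ d, Steps (MbStep (N₁.sum N₂)) c w d := by
  induction h with
  | nil => intro w₁ w₂ _ _ c _ _ _ _ _ _ _; exact ⟨c, .nil c⟩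
  | left h ih =>
    intro w₁ w₂ e₁ e₂ c c₁ c₂ d₁ d₂ hr hs₁ hs₂
    cases w₁ with
    | nil => simp at e₁
    | cons b t =>
      rw [List.map_cons] at e₁
      injection e₁ with ea el
      subst ea
      cases hs₁ with
      | cons hstep hrest =>
        obtain ⟨c', hstep', hr'⟩ := mb_lift_left hr hstep
        obtain ⟨d, hd⟩ := ih el e₂ hr' hrest hs₂
        exact ⟨d, .cons hstep' hd⟩
  | right h ih =>
    intro w₁ w₂ e₁ e₂ c c₁ c₂ d₁ d₂ hr hs₁ hs₂
    cases w₂ with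
    | nil => simp at e₂
    | cons b t =>
      rw [List.map_cons] at e₂
      injection e₂ with ea el
      subst ea
      cases hs₂ with
      | cons hstep hrest =>
        obtain ⟨c', hstep', hr'⟩ := mb_lift_right hr hstep
        obtain ⟨d, hd⟩ := ih e₁ el hr' hs₁ hrest
        exact ⟨d, .cons hstep' hd⟩

lemma mbTraces_sum (hfin₁ : ∀ p, N₁.final p = Set.univ)
    (hfin₂ : ∀ p, N₂.final p = Set.univ) :
    MbTraces (N₁.sum N₂) = Mix (MbTraces N₁) (MbTraces N₂) := by
  ext w
  constructor
  · rintro ⟨e, ⟨c, hsteps, -⟩, rfl⟩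
    obtain ⟨w₁, w₂, d₁, d₂, hI, h₁, h₂⟩ := mb_steps_decomp hsteps mbRel_init
    refine ⟨projOut w₁, ⟨w₁, ⟨d₁, h₁, fun p => by simp [hfin₁]⟩, rfl⟩,
            projOut w₂, ⟨w₂, ⟨d₂, h₂, fun p => by simp [hfin₂]⟩, rfl⟩, ?_⟩
    have := hI.filter Act.isSend
    rwa [show (w₁.map (Act.map Sum.inl)).filter Act.isSend
        = (projOut w₁).map (Act.map Sum.inl) from projOut_map _ _,
      show (w₂.map (Act.map Sum.inr)).filter Act.isSend
        = (projOut w₂).map (Act.map Sum.inr) from projOut_map _ _] at this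
  · rintro ⟨t₁, ⟨e₁, ⟨d₁, h₁, -⟩, rfl⟩, t₂, ⟨e₂, ⟨d₂, h₂, -⟩, rfl⟩, hI⟩
    obtain ⟨e, hIe, hfe⟩ :=
      interleave_filter_lift Act.isSend hI (projOut_map _ e₁) (projOut_map _ e₂)
    obtain ⟨d, hd⟩ := mb_steps_comp hIe rfl rfl mbRel_init h₁ h₂
    exact ⟨e, ⟨d, hd, fun p => sum_final hfin₁ hfin₂ d.st p⟩, hfe⟩

lemma nil_mem_mbTraces {P : Type} [DecidableEq P] {N : Network P A} (hfin : ∀ p, N.final p = Set.univ) :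
    [] ∈ MbTraces N :=
  ⟨[], ⟨MbInit N, .nil _, fun p => by simp [hfin]⟩, rfl⟩

lemma nil_mem_syncTraces {P : Type} [DecidableEq P] {N : Network P A} (hfin : ∀ p, N.final p = Set.univ) :
    [] ∈ SyncTraces N :=
  ⟨[], ⟨N.init, .nil _, fun p => by simp [hfin]⟩, rfl⟩

end SumMbTraces
/-- a forest (disjoint union) of tree networks is synchronisable iff
each component is. -/
theorem forest_synchronisability {P₁ P₂ A : Type} [DecidableEq P₁] [DecidableEq P₂]
    (N₁ : Network P₁ A) (N₂ : Network P₂ A)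
    (hfin₁ : ∀ p, N₁.final p = Set.univ) (hfin₂ : ∀ p, N₂.final p = Set.univ)
    (ht₁ : TreeTopo N₁) (ht₂ : TreeTopo N₂) :
    MbTraces (N₁.sum N₂) = SyncTraces (N₁.sum N₂) ↔
      (MbTraces N₁ = SyncTraces N₁ ∧ MbTraces N₂ = SyncTraces N₂) := by
  rw [mbTraces_sum hfin₁ hfin₂, syncTraces_sum hfin₁ hfin₂]
  constructor
  · intro h
    constructor
    · ext t
      rw [← mix_left_iff (nil_mem_mbTraces hfin₂) t, h,
        mix_left_iff (nil_mem_syncTraces hfin₂) t]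
    · ext t
      rw [← mix_right_iff (nil_mem_mbTraces hfin₁) t, h,
        mix_right_iff (nil_mem_syncTraces hfin₁) t]
  · rintro ⟨h1, h2⟩
    rw [h1, h2]
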